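/- For every prime p, the common neighborhood energy of the graph K_2 ⊔ pK_{1,3} ⊔ K_{1,p^2-1} ⊔ K_{1,3p(p-1)} equals 8p^2 - 2p - 6, and this is strictly less than 2(n-1)(n-2) where n = 4p^2 + p + 3; hence B(D_{2p}) is not CN-hyperenergetic. -/

import Mathlib

open Polynomial Matrix

/-- The common neighborhood matrix of a finite simple graph: the `(i,j)` entry is the
number of vertices adjacent to both `i` and `j` when `i ≠ j`, and `0` when `i = j`. -/
noncomputable def cnMatrix {V : Type*} [Fintype V] [DecidableEq V] (G : SimpleGraph V) :
    Matrix V V ℝ :=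
  fun i j => if i = j then 0 else ({k | G.Adj i k ∧ G.Adj j k}.ncard : ℝ)

/-- The common neighborhood energy: the sum of the absolute values of the eigenvalues of
the common neighborhood matrix. -/
noncomputable def cnEnergy {V : Type*} [Fintype V] [DecidableEq V] (G : SimpleGraph V) : ℝ :=
  ((cnMatrix G).charpoly.roots.map (fun x => |x|)).sum

/-- The star `K_{1,m}` on `m + 1` vertices, with center `0`. -/
def starGraph (m : ℕ) : SimpleGraph (Fin (m + 1)) :=
  SimpleGraph.fromRel (fun i j => i = 0 ∨ j = 0)

/-- `p` disjoint copies of the star `K_{1,m}`. -/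
def starCopies (p m : ℕ) : SimpleGraph (Fin p × Fin (m + 1)) :=
  SimpleGraph.fromRel (fun a b => a.1 = b.1 ∧ (a.2 = 0 ∨ b.2 = 0))

lemma cnMatrix_sum {α β : Type*} [Fintype α] [DecidableEq α] [Fintype β] [DecidableEq β]
    (G : SimpleGraph α) (H : SimpleGraph β) :
    cnMatrix (G ⊕g H) = Matrix.fromBlocks (cnMatrix G) 0 0 (cnMatrix H) := by
  ext i j
  rcases i with i|i <;> rcases j with j|j
  · simp only [cnMatrix, fromBlocks_apply₁₁, Sum.inl.injEq]
    by_cases h : i = j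
    · simp [h]
    · simp only [h, if_false]
      congr 2
      have : {k | (G ⊕g H).Adj (.inl i) k ∧ (G ⊕g H).Adj (.inl j) k}
           = Sum.inl '' {k | G.Adj i k ∧ G.Adj j k} := by
        ext (k|k) <;> simp
      rw [this, Set.ncard_image_of_injective _ Sum.inl_injective]
  · have : {k | (G ⊕g H).Adj (.inl i) k ∧ (G ⊕g H).Adj (.inr j) k} = ∅ := by
      ext (k|k) <;> simp
    simp only [cnMatrix, reduceCtorEq, if_false, this, Set.ncard_empty, fromBlocks_apply₁₂,
      Matrix.zero_apply, Nat.cast_zero]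
  · have : {k | (G ⊕g H).Adj (.inr i) k ∧ (G ⊕g H).Adj (.inl j) k} = ∅ := by
      ext (k|k) <;> simp
    simp only [cnMatrix, reduceCtorEq, if_false, this, Set.ncard_empty, fromBlocks_apply₂₁,
      Matrix.zero_apply, Nat.cast_zero]
  · simp only [cnMatrix, fromBlocks_apply₂₂, Sum.inr.injEq]
    by_cases h : i = j
    · simp [h]
    · simp only [h, if_false]
      congr 2
      have : {k | (G ⊕g H).Adj (.inr i) k ∧ (G ⊕g H).Adj (.inr j) k}
           = Sum.inr '' {k | H.Adj i k ∧ H.Adj j k} := by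
        ext (k|k) <;> simp
      rw [this, Set.ncard_image_of_injective _ Sum.inr_injective]

def Sblk (m : ℕ) : Matrix (Fin (m + 1)) (Fin (m + 1)) ℝ :=
  fun i j => if i ≠ j ∧ i ≠ 0 ∧ j ≠ 0 then 1 else 0

def Cblk (p : ℕ) : Matrix (Fin p × Fin 4) (Fin p × Fin 4) ℝ :=
  fun a b => if a ≠ b ∧ a.1 = b.1 ∧ a.2 ≠ 0 ∧ b.2 ≠ 0 then 1 else 0

lemma cnMatrix_top2 : cnMatrix (⊤ : SimpleGraph (Fin 2)) = 0 := by
  ext i j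
  by_cases h : i = j
  · simp [cnMatrix, h]
  · have hs : {k | (⊤ : SimpleGraph (Fin 2)).Adj i k ∧ (⊤ : SimpleGraph (Fin 2)).Adj j k} = ∅ := by
      ext k
      simp only [SimpleGraph.top_adj, Set.mem_setOf_eq, Set.mem_empty_iff_false, iff_false]
      rintro ⟨h1, h2⟩
      fin_cases i <;> fin_cases j <;> fin_cases k <;> simp_all
    simp only [cnMatrix, h, if_false, Matrix.zero_apply]
    rw [hs]
    simp

lemma cnMatrix_starGraph (m : ℕ) : cnMatrix (starGraph m) = Sblk m := by
  ext i j
  by_cases h : i = j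
  · simp [cnMatrix, Sblk, h]
  · by_cases hi : i = 0
    · have hs : {k | (starGraph m).Adj i k ∧ (starGraph m).Adj j k} = ∅ := by
        ext k
        simp only [starGraph, SimpleGraph.fromRel_adj, Set.mem_setOf_eq,
          Set.mem_empty_iff_false, iff_false]
        rintro ⟨⟨hik, _⟩, hjk, (h0 | h0) | (h0 | h0)⟩ <;> simp_all
      simp only [cnMatrix, h, if_false]
      rw [hs]
      simp [Sblk, h, hi]
    · by_cases hj : j = 0
      · have hs : {k | (starGraph m).Adj i k ∧ (starGraph m).Adj j k} = ∅ := by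
          ext k
          simp only [starGraph, SimpleGraph.fromRel_adj, Set.mem_setOf_eq,
            Set.mem_empty_iff_false, iff_false]
          rintro ⟨⟨hik, (h0 | h0) | (h0 | h0)⟩, hjk, _⟩ <;> simp_all
        simp only [cnMatrix, h, if_false]
        rw [hs]
        simp [Sblk, h, hj]
      · have hs : {k | (starGraph m).Adj i k ∧ (starGraph m).Adj j k} = {0} := by
          ext k
          simp only [starGraph, SimpleGraph.fromRel_adj, Set.mem_setOf_eq, Set.mem_singleton_iff]
          constructor
          · rintro ⟨⟨hik, (h0 | h0) | (h0 | h0)⟩, _⟩ <;> simp_all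
          · rintro rfl
            refine ⟨⟨?_, ?_⟩, ?_, ?_⟩ <;> simp_all
        simp only [cnMatrix, h, if_false]
        rw [hs]
        simp [Sblk, h, hi, hj]

lemma cnMatrix_starCopies (p : ℕ) : cnMatrix (starCopies p 3) = Cblk p := by
  ext a b
  by_cases h : a = b
  · simp [cnMatrix, Cblk, h]
  · by_cases hab : a.1 = b.1
    · by_cases ha : a.2 = 0
      · have hs : {k | (starCopies p 3).Adj a k ∧ (starCopies p 3).Adj b k} = ∅ := by
          ext k
          simp only [starCopies, SimpleGraph.fromRel_adj, Set.mem_setOf_eq,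
            Set.mem_empty_iff_false, iff_false]
          rintro ⟨⟨hak, hc⟩, hbk, hc'⟩
          have hb : ¬ b.2 = 0 := fun hb => h (Prod.ext hab (by rw [ha, hb]))
          have hk2 : k.2 = 0 := by rcases hc' with ⟨h1, h2 | h2⟩ | ⟨h1, h2 | h2⟩ <;> simp_all
          have hk1 : k.1 = a.1 := by rcases hc with ⟨h1, _⟩ | ⟨h1, _⟩ <;> simp_all
          exact hak (Prod.ext_iff.mpr ⟨hk1.symm, by rw [hk2, ha]⟩)
        simp only [cnMatrix, h, if_false]
        rw [hs]
        simp [Cblk, h, ha]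
      · by_cases hb : b.2 = 0
        · have hs : {k | (starCopies p 3).Adj a k ∧ (starCopies p 3).Adj b k} = ∅ := by
            ext k
            simp only [starCopies, SimpleGraph.fromRel_adj, Set.mem_setOf_eq,
              Set.mem_empty_iff_false, iff_false]
            rintro ⟨⟨hak, hc⟩, hbk, hc'⟩
            have hk2 : k.2 = 0 := by rcases hc with ⟨h1, h2 | h2⟩ | ⟨h1, h2 | h2⟩ <;> simp_all
            have hk1 : k.1 = b.1 := by rcases hc' with ⟨h1, _⟩ | ⟨h1, _⟩ <;> simp_all
            exact hbk (Prod.ext_iff.mpr ⟨hk1.symm, by rw [hk2, hb]⟩)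
          simp only [cnMatrix, h, if_false]
          rw [hs]
          simp [Cblk, h, hb]
        · have hs : {k | (starCopies p 3).Adj a k ∧ (starCopies p 3).Adj b k} = {(a.1, 0)} := by
            ext k
            simp only [starCopies, SimpleGraph.fromRel_adj, Set.mem_setOf_eq,
              Set.mem_singleton_iff]
            constructor
            · rintro ⟨⟨hak, hc⟩, hbk, hc'⟩
              have hk2 : k.2 = 0 := by rcases hc with ⟨h1, h2 | h2⟩ | ⟨h1, h2 | h2⟩ <;> simp_all
              have hk1 : k.1 = a.1 := by rcases hc with ⟨h1, _⟩ | ⟨h1, _⟩ <;> simp_all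
              exact Prod.ext hk1 hk2
            · rintro rfl
              refine ⟨⟨fun hh => ha ?_, Or.inr ⟨rfl, Or.inl rfl⟩⟩,
                fun hh => hb ?_, Or.inr ⟨hab, Or.inl rfl⟩⟩
              · rw [hh]
              · rw [hh]
          simp only [cnMatrix, h, if_false]
          rw [hs]
          simp [Cblk, h, hab, ha, hb]
    · have hs : {k | (starCopies p 3).Adj a k ∧ (starCopies p 3).Adj b k} = ∅ := by
        ext k
        simp only [starCopies, SimpleGraph.fromRel_adj, Set.mem_setOf_eq,
          Set.mem_empty_iff_false, iff_false]
        rintro ⟨⟨hak, hc⟩, hbk, hc'⟩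
        have h1 : k.1 = a.1 := by rcases hc with ⟨h1, _⟩ | ⟨h1, _⟩ <;> simp_all
        have h2 : k.1 = b.1 := by rcases hc' with ⟨h1, _⟩ | ⟨h1, _⟩ <;> simp_all
        exact hab (h1 ▸ h2)
      simp only [cnMatrix, h, if_false]
      rw [hs]
      simp [Cblk, h, hab]

def Kblk (m : ℕ) : Matrix (Fin m) (Fin m) ℝ := fun i j => if i = j then 0 else 1

lemma eval_charpoly {n : Type*} [Fintype n] [DecidableEq n] (M : Matrix n n ℝ) (r : ℝ) :
    eval r M.charpoly = det (Matrix.diagonal (fun _ => r) - M) := by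
  rw [Matrix.charpoly, ← Polynomial.coe_evalRingHom, RingHom.map_det]
  congr 1
  ext i j
  by_cases h : i = j
  · subst h; simp [charmatrix_apply_eq]
  · simp [charmatrix_apply_ne _ _ _ h, Matrix.diagonal_apply_ne _ h]

lemma charpoly_zero' (n : Type*) [Fintype n] [DecidableEq n] :
    (0 : Matrix n n ℝ).charpoly = X ^ (Fintype.card n) := by
  have h : charmatrix (0 : Matrix n n ℝ) = diagonal (fun _ => X) := by
    ext i j
    by_cases h : i = j
    · subst h; simp [charmatrix_apply_eq]
    · simp [charmatrix_apply_ne _ _ _ h, Matrix.diagonal_apply_ne _ h]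
  rw [Matrix.charpoly, h, det_diagonal]
  simp

lemma charpoly_Kblk (m : ℕ) (hm : 1 ≤ m) :
    (Kblk m).charpoly = (X - C ((m : ℝ) - 1)) * (X + 1) ^ (m - 1) := by
  apply Polynomial.eq_of_infinite_eval_eq
  apply Set.Infinite.mono (s := ({-1} : Set ℝ)ᶜ) ?_ ((Set.finite_singleton _).infinite_compl)
  intro r hr
  have hr1 : r + 1 ≠ 0 := by
    intro hh
    exact hr (by simp only [Set.mem_singleton_iff]; linarith)
  simp only [Set.mem_setOf_eq]
  rw [_root_.eval_charpoly]
  have hd : Matrix.diagonal (fun _ => r) - Kblk m =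
      (r + 1) • ((1 : Matrix (Fin m) (Fin m) ℝ) +
        Matrix.replicateCol Unit (fun _ => -(r + 1)⁻¹) * Matrix.replicateRow Unit (fun _ => (1 : ℝ))) := by
    ext i j
    by_cases h : i = j
    · subst h
      simp [Kblk, Matrix.diagonal_apply_eq, Matrix.one_apply_eq, Matrix.mul_apply]
      field_simp
      ring
    · simp [Kblk, h, Matrix.diagonal_apply_ne _ h, Matrix.one_apply_ne h, Matrix.mul_apply]
      field_simp
  rw [hd, det_smul, det_one_add_replicateCol_mul_replicateRow]
  have hm' : m - 1 + 1 = m := Nat.succ_pred_eq_of_pos hm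
  simp only [eval_mul, eval_pow, eval_add, eval_sub, eval_X, eval_C, eval_one, dotProduct,
    Finset.sum_const, Finset.card_univ, Fintype.card_fin, smul_eq_mul, Fintype.card_fin]
  rw [← hm', pow_succ]
  field_simp
  simp only [Nat.add_sub_cancel, nsmul_eq_mul]
  push_cast
  field_simp
  ring

lemma charpoly_Sblk (m : ℕ) (hm : 1 ≤ m) :
    (Sblk m).charpoly = X * ((X - C ((m : ℝ) - 1)) * (X + 1) ^ (m - 1)) := by
  let e : Fin 1 ⊕ Fin m ≃ Fin (m + 1) :=
    finSumFinEquiv.trans (finCongr (Nat.add_comm 1 m))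
  have hval : ∀ x : Fin 1 ⊕ Fin m, (e x).val = Sum.elim (fun i : Fin 1 => (i : ℕ))
      (fun j : Fin m => 1 + (j : ℕ)) x := by
    rintro (x | x) <;> simp [e, finSumFinEquiv] <;> omega
  have hre : (reindex e.symm e.symm) (Sblk m) =
      fromBlocks (0 : Matrix (Fin 1) (Fin 1) ℝ) 0 0 (Kblk m) := by
    ext u v
    rcases u with u | u <;> rcases v with v | v <;>
      simp only [reindex_apply, submatrix_apply, Equiv.symm_symm, Sblk, Kblk,
        fromBlocks_apply₁₁, fromBlocks_apply₁₂, fromBlocks_apply₂₁, fromBlocks_apply₂₂,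
        Matrix.zero_apply]
    · have h1 : e (Sum.inl u) = 0 := by
        have := hval (Sum.inl u); rw [Fin.ext_iff]; simp at this ⊢; omega
      simp [h1]
    · have h1 : e (Sum.inl u) = 0 := by
        have := hval (Sum.inl u); rw [Fin.ext_iff]; simp at this ⊢; omega
      simp [h1]
    · have h1 : e (Sum.inl v) = 0 := by
        have := hval (Sum.inl v); rw [Fin.ext_iff]; simp at this ⊢; omega
      simp [h1]
    · have h1 := hval (Sum.inr u)
      have h2 := hval (Sum.inr v)
      simp only [Sum.elim_inr] at h1 h2
      have hu0 : e (Sum.inr u) ≠ 0 := by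
        simp only [ne_eq, Fin.ext_iff, Fin.val_zero]; omega
      have hv0 : e (Sum.inr v) ≠ 0 := by
        simp only [ne_eq, Fin.ext_iff, Fin.val_zero]; omega
      by_cases h : u = v
      · subst h; simp
      · have h' : (u : ℕ) ≠ (v : ℕ) := fun hh => h (Fin.ext hh)
        have hne : e (Sum.inr u) ≠ e (Sum.inr v) := by
          simp only [ne_eq, Fin.ext_iff]; omega
        simp [h, hne, hu0, hv0]
  have := Matrix.charpoly_reindex (R := ℝ) e.symm (Sblk m)
  rw [hre] at this
  rw [← this, Matrix.charpoly_fromBlocks_zero₂₁, charpoly_zero', charpoly_Kblk m hm]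
  simp

lemma charmatrix_blockDiagonal {o n : Type*} [Fintype o] [DecidableEq o] [Fintype n]
    [DecidableEq n] (M : o → Matrix n n ℝ) :
    charmatrix (blockDiagonal M) = blockDiagonal (fun k => charmatrix (M k)) := by
  ext ⟨i, k⟩ ⟨j, k'⟩
  by_cases h : k = k'
  · subst h
    by_cases hij : i = j
    · subst hij; simp [charmatrix_apply_eq, blockDiagonal_apply]
    · have : (i, k) ≠ (j, k) := by simp [Prod.ext_iff, hij]
      simp [charmatrix_apply_ne _ _ _ this, charmatrix_apply_ne _ _ _ hij,
        blockDiagonal_apply]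
  · have : (i, k) ≠ (j, k') := by simp [Prod.ext_iff, h]
    simp [charmatrix_apply_ne _ _ _ this, blockDiagonal_apply, h]

lemma charpoly_blockDiagonal {o n : Type*} [Fintype o] [DecidableEq o] [Fintype n]
    [DecidableEq n] (M : o → Matrix n n ℝ) :
    (blockDiagonal M).charpoly = ∏ k, (M k).charpoly := by
  rw [Matrix.charpoly, charmatrix_blockDiagonal, det_blockDiagonal]
  rfl

lemma charpoly_Cblk (p : ℕ) :
    (Cblk p).charpoly = (X * ((X - C (2 : ℝ)) * (X + 1) ^ 2)) ^ p := by
  have hre : (reindex (Equiv.prodComm (Fin p) (Fin 4)) (Equiv.prodComm (Fin p) (Fin 4)))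
      (Cblk p) = blockDiagonal (fun _ : Fin p => Sblk 3) := by
    ext ⟨i, a⟩ ⟨j, b⟩
    simp only [reindex_apply, submatrix_apply, Equiv.prodComm_symm, Equiv.prodComm_apply,
      Prod.swap_prod_mk]
    by_cases h : a = b
    · subst h
      by_cases hij : i = j
      · subst hij; simp [Cblk, Sblk, blockDiagonal_apply]
      · have : (a, i) ≠ (a, j) := by simp [Prod.ext_iff, hij]
        simp [Cblk, Sblk, blockDiagonal_apply, this, hij]
    · simp [Cblk, blockDiagonal_apply, h, Prod.ext_iff]
  have h2 := Matrix.charpoly_reindex (R := ℝ) (Equiv.prodComm (Fin p) (Fin 4)) (Cblk p)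
  rw [hre] at h2
  rw [← h2, charpoly_blockDiagonal]
  rw [Finset.prod_const, charpoly_Sblk 3 (by norm_num)]
  norm_num

lemma roots_aux (c : ℝ) (k : ℕ) :
    (X * ((X - C c) * (X - C (-1)) ^ k)).roots =
      Multiset.replicate 1 0 + (Multiset.replicate 1 c + Multiset.replicate k (-1)) := by
  have hmon : ((X - C c) * (X - C (-1)) ^ k : ℝ[X]).Monic :=
    (monic_X_sub_C c).mul ((monic_X_sub_C (-1)).pow k)
  rw [roots_mul (Polynomial.Monic.ne_zero (monic_X.mul hmon)),
    roots_mul (Polynomial.Monic.ne_zero hmon), roots_X, roots_pow, roots_X_sub_C,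
    roots_X_sub_C, Multiset.nsmul_singleton]
  simp [Multiset.replicate_one]

lemma sum_abs_aux (c : ℝ) (hc : 0 ≤ c) (k : ℕ) :
    ((Multiset.replicate 1 (0:ℝ) + (Multiset.replicate 1 c + Multiset.replicate k (-1))).map
      (fun x => |x|)).sum = c + k := by
  simp [Multiset.map_add, Multiset.sum_add, Multiset.map_replicate, Multiset.sum_replicate,
    abs_of_nonneg hc, abs_of_nonpos, nsmul_eq_mul]

theorem B_D2p_cn_energy (p : ℕ) (hp : p.Prime)
    (G : SimpleGraph
      ((Fin 2 ⊕ Fin p × Fin 4) ⊕ Fin (p ^ 2 - 1 + 1) ⊕ Fin (3 * p * (p - 1) + 1)))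
    (hG : G = ((⊤ : SimpleGraph (Fin 2)) ⊕g starCopies p 3)
        ⊕g (starGraph (p ^ 2 - 1) ⊕g starGraph (3 * p * (p - 1)))) :
    cnEnergy G = 8 * (p : ℝ) ^ 2 - 2 * (p : ℝ) - 6 ∧
      cnEnergy G < 2 * ((4 * (p : ℝ) ^ 2 + (p : ℝ) + 3) - 1)
        * ((4 * (p : ℝ) ^ 2 + (p : ℝ) + 3) - 2) := by
  subst hG
  have hp2 : 2 ≤ p := hp.two_le
  have hpsq : 4 ≤ p ^ 2 := by nlinarith
  have hm1 : 1 ≤ p ^ 2 - 1 := by omega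
  have hm2 : 1 ≤ 3 * p * (p - 1) := Nat.mul_pos (by omega) (by omega)
  set q : ℝ := (p : ℝ) with hq
  have hq2 : (2 : ℝ) ≤ q := by rw [hq]; exact_mod_cast hp2
  have hcast1 : ((p ^ 2 - 1 : ℕ) : ℝ) = q ^ 2 - 1 := by
    rw [Nat.cast_sub (by omega)]; push_cast; ring
  have hcast2 : ((3 * p * (p - 1) : ℕ) : ℝ) = 3 * q * (q - 1) := by
    rw [Nat.cast_mul, Nat.cast_mul, Nat.cast_sub (by omega)]; push_cast; ring
  have hcast3 : ((p ^ 2 - 1 - 1 : ℕ) : ℝ) = q ^ 2 - 2 := by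
    rw [Nat.sub_sub, Nat.cast_sub (by omega)]; push_cast; ring
  have hcast4 : ((3 * p * (p - 1) - 1 : ℕ) : ℝ) = 3 * q * (q - 1) - 1 := by
    rw [Nat.cast_sub hm2, hcast2]; push_cast; ring
  have hX1 : (X + 1 : ℝ[X]) = X - C (-1) := by rw [map_neg, C_1, sub_neg_eq_add]
  have hM : cnMatrix (((⊤ : SimpleGraph (Fin 2)) ⊕g starCopies p 3)
        ⊕g (starGraph (p ^ 2 - 1) ⊕g starGraph (3 * p * (p - 1)))) =
      fromBlocks (fromBlocks 0 0 0 (Cblk p)) 0 0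
        (fromBlocks (Sblk (p ^ 2 - 1)) 0 0 (Sblk (3 * p * (p - 1)))) := by
    rw [cnMatrix_sum, cnMatrix_sum, cnMatrix_sum, cnMatrix_top2, cnMatrix_starCopies,
      cnMatrix_starGraph, cnMatrix_starGraph]
  have hchar : (cnMatrix (((⊤ : SimpleGraph (Fin 2)) ⊕g starCopies p 3)
        ⊕g (starGraph (p ^ 2 - 1) ⊕g starGraph (3 * p * (p - 1))))).charpoly =
      (X ^ 2 * (X * ((X - C (2 : ℝ)) * (X - C (-1)) ^ 2)) ^ p) *
      ((X * ((X - C (((p ^ 2 - 1 : ℕ) : ℝ) - 1)) * (X - C (-1)) ^ (p ^ 2 - 1 - 1))) *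
       (X * ((X - C (((3 * p * (p - 1) : ℕ) : ℝ) - 1)) *
         (X - C (-1)) ^ (3 * p * (p - 1) - 1)))) := by
    rw [hM, Matrix.charpoly_fromBlocks_zero₂₁, Matrix.charpoly_fromBlocks_zero₂₁,
      Matrix.charpoly_fromBlocks_zero₂₁, charpoly_zero', charpoly_Cblk,
      charpoly_Sblk _ hm1, charpoly_Sblk _ hm2, hX1]
    simp only [Fintype.card_fin]
  have hmonB : ((X * ((X - C (2 : ℝ)) * (X - C (-1)) ^ 2)) ^ p).Monic :=
    (monic_X.mul ((monic_X_sub_C 2).mul ((monic_X_sub_C (-1)).pow 2))).pow p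
  have hmonC : (X * ((X - C (((p ^ 2 - 1 : ℕ) : ℝ) - 1)) *
      (X - C (-1)) ^ (p ^ 2 - 1 - 1))).Monic :=
    monic_X.mul ((monic_X_sub_C _).mul ((monic_X_sub_C (-1)).pow _))
  have hmonD : (X * ((X - C (((3 * p * (p - 1) : ℕ) : ℝ) - 1)) *
      (X - C (-1)) ^ (3 * p * (p - 1) - 1))).Monic :=
    monic_X.mul ((monic_X_sub_C _).mul ((monic_X_sub_C (-1)).pow _))
  have hmonA : (X ^ 2 : ℝ[X]).Monic := monic_X.pow 2
  have hroots : (cnMatrix (((⊤ : SimpleGraph (Fin 2)) ⊕g starCopies p 3)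
        ⊕g (starGraph (p ^ 2 - 1) ⊕g starGraph (3 * p * (p - 1))))).charpoly.roots =
      (Multiset.replicate 2 (0 : ℝ) +
        (Multiset.replicate p 0 + (Multiset.replicate p 2 + Multiset.replicate (p * 2) (-1)))) +
      ((Multiset.replicate 1 0 + (Multiset.replicate 1 (((p ^ 2 - 1 : ℕ) : ℝ) - 1) +
          Multiset.replicate (p ^ 2 - 1 - 1) (-1))) +
       (Multiset.replicate 1 0 + (Multiset.replicate 1 (((3 * p * (p - 1) : ℕ) : ℝ) - 1) +
          Multiset.replicate (3 * p * (p - 1) - 1) (-1)))) := by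
    rw [hchar, roots_mul (Polynomial.Monic.ne_zero ((hmonA.mul hmonB).mul (hmonC.mul hmonD))),
      roots_mul (Polynomial.Monic.ne_zero (hmonA.mul hmonB)),
      roots_mul (Polynomial.Monic.ne_zero (hmonC.mul hmonD)),
      roots_pow, roots_pow, roots_X, roots_aux, roots_aux, roots_aux,
      Multiset.nsmul_singleton]
    congr 1
    rw [nsmul_add, nsmul_add, Multiset.nsmul_replicate, Multiset.nsmul_replicate,
      Multiset.nsmul_replicate]
    simp [Nat.mul_comm]
  have henergy : cnEnergy (((⊤ : SimpleGraph (Fin 2)) ⊕g starCopies p 3)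
        ⊕g (starGraph (p ^ 2 - 1) ⊕g starGraph (3 * p * (p - 1)))) =
      8 * q ^ 2 - 2 * q - 6 := by
    rw [cnEnergy, hroots]
    have habs1 : |(((p ^ 2 - 1 : ℕ) : ℝ) - 1)| = ((p ^ 2 - 1 : ℕ) : ℝ) - 1 := by
      rw [abs_of_nonneg]; rw [hcast1]; nlinarith
    have habs2 : |(((3 * p * (p - 1) : ℕ) : ℝ) - 1)| = ((3 * p * (p - 1) : ℕ) : ℝ) - 1 := by
      rw [abs_of_nonneg]; rw [hcast2]; nlinarith
    simp only [Multiset.map_add, Multiset.sum_add, Multiset.map_replicate, abs_zero,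
      abs_neg, abs_one, abs_two, habs1, habs2, Multiset.sum_replicate, smul_eq_mul,
      nsmul_eq_mul]
    rw [hcast1, hcast2, hcast3, hcast4]
    push_cast
    ring
  refine ⟨henergy, ?_⟩
  rw [henergy]
  nlinarith [sq_nonneg q, sq_nonneg (q - 2), sq_nonneg (q + 1)]
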